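/- arXiv:2009.11108 — 2 statements merged into one kernel-verified Lean document; each statement's English description precedes it below -/
import Mathlib

section
/- Let (X, μ) be a probability space, W a measurable space, p : W → X a measurable map, and m a finitely additive probability measure on the measurable subsets of W (so m(∅)=0, m(W)=1, m is nonnegative, and m(A ∪ B)=m(A)+m(B) for disjoint measurable A,B) which is equidistributed over p, i.e., m(p⁻¹(A)) = μ(A) for every measurable A ⊆ X. Then for every measurable set D ⊆ W, the set function A ↦ m(p⁻¹(A) ∩ D), defined on the measurable subsets of X, is countably additive; moreover, the resulting finite measure on X is absolutely continuous with respect to μ. -/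
open MeasureTheory Filter Topology

/-- If `m` is a finitely additive probability measure on the measurable subsets of `W`
which is equidistributed over a measurable map `p : W → X` to a probability space `(X, μ)`
(i.e. `m (p⁻¹ A) = μ A` for all measurable `A`), then for every measurable `D ⊆ W` the
set function `A ↦ m (p⁻¹ A ∩ D)` is countably additive on measurable sets, and it is
absolutely continuous with respect to `μ`. -/
theorem countably_additive_of_equidistributed_mean
    {X W : Type*} [MeasurableSpace X] [MeasurableSpace W]
    (μ : Measure X) [IsProbabilityMeasure μ]
    (p : W → X) (hp : Measurable p)
    (m : Set W → ℝ)
    (h_empty : m ∅ = 0)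
    (h_univ : m Set.univ = 1)
    (h_nonneg : ∀ A : Set W, MeasurableSet A → 0 ≤ m A)
    (h_add : ∀ A B : Set W, MeasurableSet A → MeasurableSet B → Disjoint A B →
      m (A ∪ B) = m A + m B)
    (h_equi : ∀ A : Set X, MeasurableSet A → m (p ⁻¹' A) = (μ A).toReal)
    (D : Set W) (hD : MeasurableSet D) :
    (∀ A : ℕ → Set X, (∀ n, MeasurableSet (A n)) → Pairwise (Function.onFun Disjoint A) →
      HasSum (fun n => m (p ⁻¹' (A n) ∩ D)) (m (p ⁻¹' (⋃ n, A n) ∩ D))) ∧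
    (∀ A : Set X, MeasurableSet A → μ A = 0 → m (p ⁻¹' A ∩ D) = 0) := by
  -- monotonicity of m
  have h_mono : ∀ A B : Set W, MeasurableSet A → MeasurableSet B → A ⊆ B → m A ≤ m B := by
    intro A B hA hB hAB
    have : m B = m A + m (B \ A) := by
      rw [← h_add A (B \ A) hA (hB.diff hA) disjoint_sdiff_self_right,
        Set.union_diff_cancel hAB]
    rw [this]
    have := h_nonneg (B \ A) (hB.diff hA)
    linarith
  have h_bound : ∀ A : Set X, MeasurableSet A → m (p ⁻¹' A ∩ D) ≤ (μ A).toReal := by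
    intro A hA
    rw [← h_equi A hA]
    exact h_mono _ _ ((hp hA).inter hD) (hp hA) Set.inter_subset_left
  constructor
  · intro A hA hdisj
    set ν : ℕ → ℝ := fun n => m (p ⁻¹' (A n) ∩ D) with hν
    have hνnn : ∀ n, 0 ≤ ν n := fun n => h_nonneg _ ((hp (hA n)).inter hD)
    rw [hasSum_iff_tendsto_nat_of_nonneg hνnn]
    -- partial sums
    have hpart : ∀ N : ℕ, ∑ n ∈ Finset.range N, ν n
        = m (p ⁻¹' (⋃ n ∈ Finset.range N, A n) ∩ D) := by
      intro N
      induction N with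
      | zero => simp [h_empty]
      | succ N ih =>
        rw [Finset.sum_range_succ, ih, Finset.range_add_one]
        have hset : p ⁻¹' (⋃ n ∈ insert N (Finset.range N), A n) ∩ D
            = (p ⁻¹' (⋃ n ∈ Finset.range N, A n) ∩ D) ∪ (p ⁻¹' (A N) ∩ D) := by
          simp only [Finset.mem_insert, Set.iUnion_iUnion_eq_or_left]
          rw [Set.preimage_union, Set.union_inter_distrib_right, Set.union_comm]
        rw [hset, h_add]
        · exact ((hp (MeasurableSet.biUnion (Finset.range N).countable_toSet
            (fun n _ => hA n))).inter hD)
        · exact (hp (hA N)).inter hD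
        · refine Set.disjoint_left.2 fun x hx hx' => ?_
          obtain ⟨hx1, -⟩ := hx
          obtain ⟨hx1', -⟩ := hx'
          simp only [Set.mem_preimage, Set.mem_iUnion, Finset.mem_range] at hx1
          obtain ⟨n, hn, hxn⟩ := hx1
          exact Set.disjoint_left.1 (hdisj (by omega : n ≠ N)) hxn hx1'
    -- tail sets
    set S : ℕ → Set X := fun N => ⋃ (n) (_ : N ≤ n), A n with hS
    have hSmeas : ∀ N, MeasurableSet (S N) :=
      fun N => MeasurableSet.iUnion fun n => MeasurableSet.iUnion fun _ => hA n
    have hSanti : Antitone S := by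
      intro i j hij
      exact Set.iUnion₂_mono' fun n hn => ⟨n, le_trans hij hn, subset_rfl⟩
    have hSinter : (⋂ N, S N) = ∅ := by
      ext x
      simp only [hS, Set.mem_iInter, Set.mem_iUnion, Set.mem_empty_iff_false, iff_false]
      intro h
      obtain ⟨n, -, hxn⟩ := h 0
      obtain ⟨k, hk, hxk⟩ := h (n + 1)
      exact Set.disjoint_left.1 (hdisj (by omega : n ≠ k)) hxn hxk
    have htail : Tendsto (fun N => (μ (S N)).toReal) atTop (𝓝 0) := by
      have h1 : Tendsto (μ ∘ S) atTop (𝓝 (μ (⋂ N, S N))) :=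
        tendsto_measure_iInter_atTop (fun N => (hSmeas N).nullMeasurableSet) hSanti
          ⟨0, measure_ne_top μ _⟩
      rw [hSinter, measure_empty] at h1
      have := (ENNReal.tendsto_toReal (by simp)).comp h1
      exact this
    -- decomposition: total = partial + tail piece
    have hdecomp : ∀ N : ℕ, m (p ⁻¹' (⋃ n, A n) ∩ D)
        = ∑ n ∈ Finset.range N, ν n + m (p ⁻¹' (S N) ∩ D) := by
      intro N
      rw [hpart N]
      have hset : p ⁻¹' (⋃ n, A n) ∩ D
          = (p ⁻¹' (⋃ n ∈ Finset.range N, A n) ∩ D) ∪ (p ⁻¹' (S N) ∩ D) := by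
        rw [← Set.union_inter_distrib_right, ← Set.preimage_union]
        congr 1
        ext x
        simp only [hS, Set.mem_preimage, Set.mem_iUnion, Set.mem_union, Finset.mem_range]
        constructor
        · rintro ⟨n, hn⟩
          rcases lt_or_ge n N with h | h
          · exact Or.inl ⟨n, h, hn⟩
          · exact Or.inr ⟨n, h, hn⟩
        · rintro (⟨n, -, hn⟩ | ⟨n, -, hn⟩) <;> exact ⟨n, hn⟩
      rw [hset, h_add]
      · exact ((hp (MeasurableSet.biUnion (Finset.range N).countable_toSet
          (fun n _ => hA n))).inter hD)
      · exact (hp (hSmeas N)).inter hD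
      · refine Set.disjoint_left.2 fun x hx hx' => ?_
        obtain ⟨hx1, -⟩ := hx
        obtain ⟨hx1', -⟩ := hx'
        simp only [hS, Set.mem_preimage, Set.mem_iUnion, Finset.mem_range] at hx1 hx1'
        obtain ⟨n, hn, hxn⟩ := hx1
        obtain ⟨k, hk, hxk⟩ := hx1'
        exact Set.disjoint_left.1 (hdisj (by omega : n ≠ k)) hxn hxk
    -- squeeze
    have hr0 : Tendsto (fun N => m (p ⁻¹' (S N) ∩ D)) atTop (𝓝 0) := by
      refine tendsto_of_tendsto_of_tendsto_of_le_of_le tendsto_const_nhds htail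
        (fun N => h_nonneg _ ((hp (hSmeas N)).inter hD)) (fun N => h_bound _ (hSmeas N))
    have : Tendsto (fun N => m (p ⁻¹' (⋃ n, A n) ∩ D) - m (p ⁻¹' (S N) ∩ D)) atTop
        (𝓝 (m (p ⁻¹' (⋃ n, A n) ∩ D) - 0)) := tendsto_const_nhds.sub hr0
    rw [sub_zero] at this
    refine this.congr fun N => ?_
    rw [hdecomp N]
    ring
  · intro A hA hμA
    have h1 := h_bound A hA
    rw [hμA] at h1
    simp only [ENNReal.toReal_zero] at h1
    exact le_antisymm h1 (h_nonneg _ ((hp hA).inter hD))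
end

section
/- Let (X, μ) be a probability space, W a measurable space, p : W → X a measurable map, and m a finitely additive probability measure on the measurable subsets of W (so m(∅)=0, m(W)=1, m is nonnegative, and m(A ∪ B)=m(A)+m(B) for disjoint measurable A,B) satisfying m(p⁻¹(A)) = μ(A) for every measurable A ⊆ X. Then for every countable measurable partition X = ⨆_{k∈ℕ} A_k and every choice of measurable sets D_k ⊆ p⁻¹(A_k), one has m(⋃_{k∈ℕ} D_k) = ∑_{k∈ℕ} m(D_k). -/
open MeasureTheory

/-- If `m` is a finitely additive probability measure on the measurable subsets of `W` with
`m (p⁻¹ A) = μ A` for all measurable `A ⊆ X`, then for every countable measurable partition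
`X = ⨆ₖ Aₖ` and every choice of measurable sets `Dₖ ⊆ p⁻¹(Aₖ)`, one has
`m (⋃ₖ Dₖ) = ∑ₖ m (Dₖ)`. -/
theorem equidistributed_mean_countably_additive_along_partition
    {X W : Type*} [MeasurableSpace X] [MeasurableSpace W]
    (μ : Measure X) [IsProbabilityMeasure μ]
    (p : W → X) (hp : Measurable p)
    (m : Set W → ℝ)
    (h_empty : m ∅ = 0)
    (h_univ : m Set.univ = 1)
    (h_nonneg : ∀ A : Set W, MeasurableSet A → 0 ≤ m A)
    (h_add : ∀ A B : Set W, MeasurableSet A → MeasurableSet B → Disjoint A B →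
      m (A ∪ B) = m A + m B)
    (h_equi : ∀ A : Set X, MeasurableSet A → m (p ⁻¹' A) = (μ A).toReal)
    (A : ℕ → Set X) (hA : ∀ k, MeasurableSet (A k))
    (hA_disj : Pairwise (Function.onFun Disjoint A)) (hA_cover : (⋃ k, A k) = Set.univ)
    (D : ℕ → Set W) (hD : ∀ k, MeasurableSet (D k))
    (hD_sub : ∀ k, D k ⊆ p ⁻¹' (A k)) :
    HasSum (fun k => m (D k)) (m (⋃ k, D k)) := by
  have hDmeasU : MeasurableSet (⋃ k, D k) := MeasurableSet.iUnion hD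
  have hD_disj : Pairwise (Function.onFun Disjoint D) := fun i j hij =>
    ((hA_disj hij).preimage p).mono (hD_sub i) (hD_sub j)
  -- monotonicity
  have h_mono : ∀ B C : Set W, MeasurableSet B → MeasurableSet C → B ⊆ C → m B ≤ m C := by
    intro B C hB hC hBC
    have hE : C = B ∪ (C \ B) := (Set.union_diff_cancel hBC).symm
    have : m C = m B + m (C \ B) := by
      conv_lhs => rw [hE]
      exact h_add B (C \ B) hB (hC.diff hB) Set.disjoint_sdiff_right
    rw [this]
    linarith [h_nonneg (C \ B) (hC.diff hB)]
  -- subadditivity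
  have h_subadd : ∀ B C : Set W, MeasurableSet B → MeasurableSet C → m (B ∪ C) ≤ m B + m C := by
    intro B C hB hC
    rw [← Set.union_diff_self, h_add B (C \ B) hB (hC.diff hB) Set.disjoint_sdiff_right]
    linarith [h_mono (C \ B) C (hC.diff hB) hC Set.diff_subset]
  -- finite additivity over finsets
  have h_fin : ∀ s : Finset ℕ, m (⋃ i ∈ s, D i) = ∑ i ∈ s, m (D i) := by
    intro s
    induction s using Finset.induction_on with
    | empty => simpa using h_empty
    | @insert a s ha ih =>
      rw [Finset.set_biUnion_insert, Finset.sum_insert ha, ← ih]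
      refine h_add _ _ (hD a) (MeasurableSet.biUnion s.countable_toSet fun i _ => hD i) ?_
      exact Set.disjoint_iUnion₂_right.mpr fun i hi => hD_disj (fun h => ha (h ▸ hi))
  have h_ub : ∀ s : Finset ℕ, ∑ i ∈ s, m (D i) ≤ m (⋃ k, D k) := by
    intro s
    rw [← h_fin s]
    exact h_mono _ _ (MeasurableSet.biUnion s.countable_toSet fun i _ => hD i) hDmeasU
      (Set.iUnion₂_subset fun i _ => Set.subset_iUnion D i)
  -- tail sets
  set T : ℕ → Set X := fun n => ⋃ k, ⋃ (_ : n ≤ k), A k with hT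
  have hTmeas : ∀ n, MeasurableSet (T n) :=
    fun n => MeasurableSet.iUnion fun k => MeasurableSet.iUnion fun _ => hA k
  have hTanti : Antitone T := by
    intro a b hab x hx
    simp only [hT, Set.mem_iUnion] at hx ⊢
    obtain ⟨k, hk, hxk⟩ := hx
    exact ⟨k, hab.trans hk, hxk⟩
  have hTempty : ⋂ n, T n = ∅ := by
    ext x
    simp only [hT, Set.mem_iInter, Set.mem_iUnion, Set.mem_empty_iff_false, iff_false]
    intro h
    obtain ⟨k, _, hxk⟩ := h 0
    obtain ⟨j, hj, hxj⟩ := h (k + 1)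
    exact (hA_disj (show k ≠ j by omega)).le_bot ⟨hxk, hxj⟩
  have hTtend : Filter.Tendsto (fun n => (μ (T n)).toReal) Filter.atTop (nhds 0) := by
    have h1 : Filter.Tendsto (fun n => μ (T n)) Filter.atTop (nhds (μ (⋂ n, T n))) := by
      refine tendsto_measure_iInter_atTop (fun n => (hTmeas n).nullMeasurableSet) hTanti ⟨0, ?_⟩
      exact (measure_lt_top μ _).ne
    rw [hTempty, measure_empty] at h1
    simpa [Function.comp_def] using (ENNReal.tendsto_toReal (by simp)).comp h1
  -- bound m(U) ≤ Sₙ + μ(Tₙ)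
  have h_key : ∀ n : ℕ, m (⋃ k, D k) ≤ ∑ i ∈ Finset.range n, m (D i) + (μ (T n)).toReal := by
    intro n
    have hsub : (⋃ k, D k) ⊆ (⋃ i ∈ Finset.range n, D i) ∪ p ⁻¹' (T n) := by
      rintro w hw
      obtain ⟨k, hk⟩ := Set.mem_iUnion.mp hw
      rcases lt_or_ge k n with h | h
      · exact Or.inl (Set.mem_biUnion (Finset.mem_range.mpr h) hk)
      · exact Or.inr (Set.mem_iUnion₂.mpr ⟨k, h, hD_sub k hk⟩)
    have hBmeas : MeasurableSet (⋃ i ∈ Finset.range n, D i) :=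
      MeasurableSet.biUnion (Finset.range n).countable_toSet fun i _ => hD i
    have hPmeas : MeasurableSet (p ⁻¹' (T n)) := hp (hTmeas n)
    calc m (⋃ k, D k) ≤ m ((⋃ i ∈ Finset.range n, D i) ∪ p ⁻¹' (T n)) :=
          h_mono _ _ hDmeasU (hBmeas.union hPmeas) hsub
      _ ≤ m (⋃ i ∈ Finset.range n, D i) + m (p ⁻¹' (T n)) := h_subadd _ _ hBmeas hPmeas
      _ = ∑ i ∈ Finset.range n, m (D i) + (μ (T n)).toReal := by
          rw [h_fin, h_equi _ (hTmeas n)]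
  -- conclude via LUB
  refine hasSum_of_isLUB_of_nonneg _ (fun k => h_nonneg _ (hD k)) ⟨?_, ?_⟩
  · rintro x ⟨s, rfl⟩
    exact h_ub s
  · intro b hb
    have hball : ∀ n, m (⋃ k, D k) ≤ b + (μ (T n)).toReal := by
      intro n
      have := hb ⟨Finset.range n, rfl⟩
      linarith [h_key n]
    have : Filter.Tendsto (fun n => b + (μ (T n)).toReal) Filter.atTop (nhds b) := by
      simpa using (tendsto_const_nhds.add hTtend)
    exact ge_of_tendsto' this hball
end
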